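/- Let X, Y be n×n real symmetric matrices with the 2n×2n block matrix [X, I; I, Y] positive definite, and let Ξ be an invertible n×n real matrix. Then the 2n×2n block matrix [Y, Ξ; Ξᵀ, Ξᵀ(Y − X⁻¹)⁻¹Ξ] is positive definite. -/

import Mathlib

open Matrix

section Aux

variable {m k : Type*} [Fintype m] [Fintype k] [DecidableEq m] [DecidableEq k]

private lemma posDef_toBlocks₁₁ {A : Matrix m m ℝ} {B : Matrix m k ℝ} {C : Matrix k m ℝ}
    {D : Matrix k k ℝ} (h : (fromBlocks A B C D).PosDef) : A.PosDef := by
  refine PosDef.of_dotProduct_mulVec_pos (isHermitian_fromBlocks_iff.mp h.1).1 fun x hx => ?_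
  have hz : Sum.elim x (0 : k → ℝ) ≠ 0 := by
    intro h0
    exact hx (funext fun i => congrFun h0 (Sum.inl i))
  have := h.dotProduct_mulVec_pos hz
  simpa [fromBlocks_mulVec, sumElim_dotProduct_sumElim] using this

private lemma posDef_fromBlocks₁₁ {A : Matrix m m ℝ} (B : Matrix m k ℝ) (D : Matrix k k ℝ)
    (hA : A.PosDef) [Invertible A]
    (h : (fromBlocks A B Bᴴ D).PosDef) : (D - Bᴴ * A⁻¹ * B).PosDef := by
  refine PosDef.of_dotProduct_mulVec_pos ((IsHermitian.fromBlocks₁₁ _ _ hA.1).mp h.1) fun x hx => ?_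
  have hz : (-((A⁻¹ * B) *ᵥ x)) ⊕ᵥ x ≠ 0 := by
    intro h0
    exact hx (funext fun i => congrFun h0 (Sum.inr i))
  have := h.dotProduct_mulVec_pos hz
  rw [dotProduct_mulVec, schur_complement_eq₁₁ B D _ _ hA.1, neg_add_cancel, dotProduct_zero,
    zero_add] at this
  rwa [dotProduct_mulVec]

private lemma posDef_fromBlocks₂₂ (A : Matrix m m ℝ) (B : Matrix m k ℝ)
    {D : Matrix k k ℝ} (hD : D.PosDef) [Invertible D]
    (h : (A - B * D⁻¹ * Bᴴ).PosDef) : (fromBlocks A B Bᴴ D).PosDef := by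
  refine PosDef.of_dotProduct_mulVec_pos ((IsHermitian.fromBlocks₂₂ _ _ hD.1).mpr h.1) fun z hz => ?_
  rw [dotProduct_mulVec, ← Sum.elim_comp_inl_inr z, schur_complement_eq₂₂ A B _ _ hD.1]
  by_cases hx : z ∘ Sum.inl = 0
  · have hy : (D⁻¹ * Bᴴ) *ᵥ (z ∘ Sum.inl) + z ∘ Sum.inr ≠ 0 := by
      rw [hx, mulVec_zero, zero_add]
      intro h0
      apply hz
      rw [← Sum.elim_comp_inl_inr z, hx, h0]
      ext (i | i) <;> rfl
    have h1 := hD.dotProduct_mulVec_pos hy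
    have h2 := h.posSemidef.dotProduct_mulVec_nonneg (z ∘ Sum.inl)
    rw [dotProduct_mulVec] at h1 h2
    positivity
  · have h1 := hD.posSemidef.dotProduct_mulVec_nonneg ((D⁻¹ * Bᴴ) *ᵥ (z ∘ Sum.inl) + z ∘ Sum.inr)
    have h2 := h.dotProduct_mulVec_pos hx
    rw [dotProduct_mulVec] at h1 h2
    positivity

private lemma posDef_conj {M : Matrix m m ℝ} (hM : M.PosDef) (P : Matrix m m ℝ)
    (hP : IsUnit P) : (Pᴴ * M * P).PosDef := by
  refine PosDef.of_dotProduct_mulVec_pos (by rw [IsHermitian, conjTranspose_mul, conjTranspose_mul, conjTranspose_conjTranspose,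
    hM.1.eq, Matrix.mul_assoc]) fun x hx => ?_
  have hPx : P *ᵥ x ≠ 0 := fun h0 => hx <| by
    have := mulVec_injective_iff_isUnit.mpr hP
    exact this (by simpa using h0)
  have := hM.dotProduct_mulVec_pos hPx
  have heq : star x ⬝ᵥ (Pᴴ * M * P) *ᵥ x = star (P *ᵥ x) ⬝ᵥ M *ᵥ (P *ᵥ x) := by
    rw [dotProduct_mulVec, star_mulVec, ← dotProduct_mulVec, Matrix.mul_assoc,
      ← mulVec_mulVec, ← mulVec_mulVec]
    rw [dotProduct_mulVec]
  rw [heq]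
  simpa using this

end Aux

/-- **Lemma D.1, part 1**: if `[X, I; I, Y] ≻ 0` with `X, Y` symmetric and `Ξ`
invertible, then `Ψ_P(X,Y,Ξ) = [Y, Ξ; Ξᵀ, Ξᵀ(Y − X⁻¹)⁻¹Ξ]` is positive
definite. -/
theorem psiP_posDef {n : ℕ} {X Y Ξ : Matrix (Fin n) (Fin n) ℝ}
    (hX : X.IsSymm) (hY : Y.IsSymm) (hΞ : IsUnit Ξ)
    (hXY : (Matrix.fromBlocks X (1 : Matrix (Fin n) (Fin n) ℝ)
      (1 : Matrix (Fin n) (Fin n) ℝ) Y).PosDef) :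
    (Matrix.fromBlocks Y Ξ Ξᵀ (Ξᵀ * (Y - X⁻¹)⁻¹ * Ξ)).PosDef := by
  have hXpd : X.PosDef := posDef_toBlocks₁₁ hXY
  haveI : Invertible X := hXpd.isUnit.invertible
  have hS : (Y - X⁻¹).PosDef := by
    have h1 : ((1 : Matrix (Fin n) (Fin n) ℝ))ᴴ = 1 := conjTranspose_one
    have := posDef_fromBlocks₁₁ (1 : Matrix (Fin n) (Fin n) ℝ) Y hXpd (by rwa [h1])
    simpa using this
  haveI : Invertible (Y - X⁻¹) := hS.isUnit.invertible
  haveI : Invertible (Y - X⁻¹)⁻¹ := hS.inv.isUnit.invertible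
  have hM : (fromBlocks Y (1 : Matrix (Fin n) (Fin n) ℝ) 1 (Y - X⁻¹)⁻¹).PosDef := by
    have h1 : ((1 : Matrix (Fin n) (Fin n) ℝ))ᴴ = 1 := conjTranspose_one
    have hinv : (Y - X⁻¹)⁻¹⁻¹ = Y - X⁻¹ :=
      nonsing_inv_nonsing_inv _ ((isUnit_iff_isUnit_det _).mp hS.isUnit)
    have hgoal : (Y - 1 * ((Y - X⁻¹)⁻¹)⁻¹ * (1 : Matrix (Fin n) (Fin n) ℝ)ᴴ).PosDef := by
      rw [hinv, h1, Matrix.one_mul, Matrix.mul_one]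
      have : Y - (Y - X⁻¹) = X⁻¹ := by abel
      rw [this]
      exact hXpd.inv
    have := posDef_fromBlocks₂₂ Y (1 : Matrix (Fin n) (Fin n) ℝ) hS.inv hgoal
    rwa [h1] at this
  have hP : IsUnit (fromBlocks (1 : Matrix (Fin n) (Fin n) ℝ) 0 0 Ξ) := by
    rw [isUnit_iff_isUnit_det, det_fromBlocks_zero₂₁, det_one, one_mul]
    exact (isUnit_iff_isUnit_det _).mp hΞ
  have := posDef_conj hM _ hP
  have heq : (fromBlocks (1 : Matrix (Fin n) (Fin n) ℝ) 0 0 Ξ)ᴴ *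
      (fromBlocks Y (1 : Matrix (Fin n) (Fin n) ℝ) 1 (Y - X⁻¹)⁻¹) *
      (fromBlocks (1 : Matrix (Fin n) (Fin n) ℝ) 0 0 Ξ) =
      fromBlocks Y Ξ Ξᵀ (Ξᵀ * (Y - X⁻¹)⁻¹ * Ξ) := by
    rw [fromBlocks_conjTranspose, fromBlocks_multiply, fromBlocks_multiply]
    simp [Matrix.mul_assoc, conjTranspose_eq_transpose_of_trivial]
  rwa [heq] at this
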